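/- Define T : ℕ → ℕ by T(1)=1 and for n ≥ 2, T(n) = (1/(2(n-1))) \sum_{i=1}^{n-1} \binom{n}{i} i(n-i) T(i) T(n-i). Then T(n) = n^{n-2} for all n ≥ 1. -/

import Mathlib

open Finset


lemma sum_range_succ_eq_Icc (f : ℕ → ℚ) (m : ℕ) :
    ∑ k ∈ range (m+1), f k = f 0 + ∑ k ∈ Icc 1 m, f k := by
  induction m with
  | zero => simp
  | succ m ih =>
      rw [Finset.sum_range_succ, ih, Finset.sum_Icc_succ_top (by omega : 1 ≤ m+1), add_assoc]

lemma sum_Icc_eq_range' (f : ℕ → ℚ) (a n : ℕ) :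
    ∑ k ∈ Icc a n, f k = ∑ i ∈ range (n+1-a), f (a+i) := by
  rw [← Finset.Ico_add_one_right_eq_Icc, Finset.sum_Ico_eq_sum_range]

lemma negpow_sub (a b : ℕ) (h : b ≤ a) : (-1:ℚ)^(a-b) = (-1)^a * (-1)^b := by
  have h1 : (-1:ℚ)^(a-b) * (-1)^b = (-1)^a := by
    rw [← pow_add]; congr 1; omega
  have h2 : ((-1:ℚ)^b) * ((-1:ℚ)^b) = 1 := by
    have : b + b = 2 * b := by omega
    rw [← pow_add, this, pow_mul]; norm_num
  calc (-1:ℚ)^(a-b) = (-1:ℚ)^(a-b) * ((-1:ℚ)^b * (-1:ℚ)^b) := by rw [h2, mul_one]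
  _ = ((-1:ℚ)^(a-b) * (-1)^b) * (-1)^b := by ring
  _ = (-1)^a * (-1)^b := by rw [h1]

lemma altM : ∀ m : ℕ, ∀ j : ℕ, j < m →
    ∑ k ∈ range (m+1), (-1:ℚ)^k * (m.choose k : ℚ) * (k:ℚ)^j = 0 := by
  intro m
  induction m using Nat.strong_induction_on with
  | _ m IH =>
    intro j hj
    match j with
    | 0 =>
      simp only [pow_zero, mul_one]
      have h := Int.alternating_sum_range_choose_of_ne (n := m) (by omega)
      have h2 := congrArg (fun z : ℤ => (z : ℚ)) h
      push_cast at h2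
      simpa using h2
    | j+1 =>
      obtain ⟨m', rfl⟩ : ∃ m', m = m'+1 := ⟨m-1, by omega⟩
      rw [Finset.sum_range_succ']
      have key : ∀ i ∈ range (m'+1), (-1:ℚ)^(i+1) * ((m'+1).choose (i+1) : ℚ) * ((i+1:ℕ):ℚ)^(j+1)
          = ∑ l ∈ range (j+1),
              (-((m'+1):ℚ) * (j.choose l)) * ((-1:ℚ)^i * (m'.choose i : ℚ) * (i:ℚ)^l) := by
        intro i _
        have h1 : (((m'+1).choose (i+1) : ℚ)) * ((i:ℚ)+1) = ((m'+1):ℚ) * (m'.choose i : ℚ) := by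
          have := Nat.add_one_mul_choose_eq m' i
          have h2 := congrArg (fun z : ℕ => (z : ℚ)) this
          push_cast at h2
          linarith [h2]
        have hexp : ((i:ℚ)+1)^j = ∑ l ∈ range (j+1), (i:ℚ)^l * (j.choose l : ℚ) := by
          rw [add_pow]; simp
        push_cast
        calc (-1:ℚ)^(i+1) * ((m'+1).choose (i+1) : ℚ) * ((i:ℚ)+1)^(j+1)
            = (-1:ℚ)^(i+1) * (((m'+1).choose (i+1) : ℚ) * ((i:ℚ)+1)) * ((i:ℚ)+1)^j := by ring
          _ = (-1:ℚ)^(i+1) * (((m'+1):ℚ) * (m'.choose i : ℚ)) * ((i:ℚ)+1)^j := by rw [h1]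
          _ = ∑ l ∈ range (j+1), (-((m'+1):ℚ) * (j.choose l)) * ((-1:ℚ)^i * (m'.choose i : ℚ) * (i:ℚ)^l) := by
              rw [hexp, Finset.mul_sum]
              refine Finset.sum_congr rfl fun l _ => ?_
              ring
      rw [Finset.sum_congr rfl key, Finset.sum_comm]
      have inner0 : ∀ l ∈ range (j+1),
          ∑ i ∈ range (m'+1), (-((m'+1):ℚ) * (j.choose l)) * ((-1:ℚ)^i * (m'.choose i : ℚ) * (i:ℚ)^l) = 0 := by
        intro l hl
        rw [← Finset.mul_sum, IH m' (by omega) l (by simp at hl; omega), mul_zero]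
      rw [Finset.sum_congr rfl inner0]
      simp

lemma altD (m : ℕ) (hm : 1 ≤ m) (x : ℚ) :
    ∑ k ∈ range (m+1), (-1:ℚ)^k * (m.choose k : ℚ) * (x + k)^(m-1) = 0 := by
  have expand : ∀ k : ℕ, (x + (k:ℚ))^(m-1)
      = ∑ j ∈ range m, x^j * (k:ℚ)^(m-1-j) * ((m-1).choose j : ℚ) := by
    intro k
    rw [add_pow]
    apply Finset.sum_congr (by congr 1; omega) fun j _ => rfl
  calc ∑ k ∈ range (m+1), (-1:ℚ)^k * (m.choose k : ℚ) * (x + k)^(m-1)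
      = ∑ k ∈ range (m+1), ∑ j ∈ range m,
          (x^j * ((m-1).choose j : ℚ)) * ((-1:ℚ)^k * (m.choose k : ℚ) * (k:ℚ)^(m-1-j)) := by
        refine Finset.sum_congr rfl fun k _ => ?_
        rw [expand k, Finset.mul_sum]
        refine Finset.sum_congr rfl fun j _ => ?_
        ring
    _ = ∑ j ∈ range m, ∑ k ∈ range (m+1),
          (x^j * ((m-1).choose j : ℚ)) * ((-1:ℚ)^k * (m.choose k : ℚ) * (k:ℚ)^(m-1-j)) :=
        Finset.sum_comm
    _ = 0 := by
        refine Finset.sum_eq_zero fun j _ => ?_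
        rw [← Finset.mul_sum, altM m (m-1-j) (by omega), mul_zero]
lemma negpow_congr (a b : ℕ) (h : a % 2 = b % 2) : (-1:ℚ)^a = (-1)^b := by
  rw [neg_one_pow_eq_pow_mod_two, h, ← neg_one_pow_eq_pow_mod_two]



lemma abelA (n : ℕ) (x y : ℚ) :
    (y + n)^n + ∑ k ∈ Icc 1 n, (n.choose k : ℚ) * x * (x + k)^(k-1) * (y + ((n-k:ℕ):ℚ))^(n-k)
      = (x + y + n)^n := by
  set g : ℕ → ℚ := fun m => (-1:ℚ)^m * (n.choose m : ℚ) * x^m * (x+y+n)^(n-m) with hg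
  set F : ℕ → ℕ → ℚ := fun k m =>
    (-1:ℚ)^(m+k) * (n.choose m : ℚ) * (m.choose k : ℚ) * x * (x+k)^(m-1) * (x+y+n)^(n-m) with hF
  have step1 : (y + (n:ℚ))^n = ∑ m ∈ range (n+1), g m := by
    have h0 : (y + (n:ℚ)) = (x+y+n) - x := by ring
    rw [h0, sub_pow, ← Finset.sum_range_reflect]
    refine Finset.sum_congr rfl fun j hj => ?_
    rw [Finset.mem_range] at hj
    have hjn : j ≤ n := by omega
    have e1 : n + 1 - 1 - j = n - j := by omega
    have e2 : n - (n - j) = j := by omega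
    have e3 : n.choose (n - j) = n.choose j := Nat.choose_symm hjn
    have e4 : (-1:ℚ)^((n-j)+n) = (-1)^j := negpow_congr _ _ (by omega)
    rw [e1, e2, e3, e4, hg]
    ring
  have step2 : ∀ k ∈ Icc 1 n,
      (n.choose k : ℚ) * x * (x + k)^(k-1) * (y + ((n-k:ℕ):ℚ))^(n-k)
        = ∑ m ∈ Icc k n, F k m := by
    intro k hk
    rw [Finset.mem_Icc] at hk
    obtain ⟨hk1, hkn⟩ := hk
    have hyc : (y + ((n-k:ℕ):ℚ)) = (x+y+n) - (x+k) := by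
      rw [Nat.cast_sub hkn]; ring
    rw [hyc, sub_pow, Finset.mul_sum, sum_Icc_eq_range' (F k) k n, ← Finset.sum_range_reflect]
    have hrange : n - k + 1 = n + 1 - k := by omega
    rw [hrange]
    refine Finset.sum_congr rfl fun i hi => ?_
    rw [Finset.mem_range] at hi
    have hink : i ≤ n - k := by omega
    have e1 : n + 1 - k - 1 - i = n - k - i := by omega
    have e2 : (n-k) - ((n-k) - i) = i := by omega
    have e3 : (n-k).choose (n-k-i) = (n-k).choose i := Nat.choose_symm hink
    have e4 : (-1:ℚ)^((n-k-i)+(n-k)) = (-1)^((k+i)+k) := negpow_congr _ _ (by omega)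
    have e5 : n.choose (k+i) * (k+i).choose k = n.choose k * (n-k).choose i := by
      have := Nat.choose_mul (n := n) (show k ≤ k + i by omega)
      simpa using this
    have e5' : ((n.choose (k+i)) : ℚ) * ((k+i).choose k : ℚ) = (n.choose k : ℚ) * ((n-k).choose i : ℚ) := by
      exact_mod_cast congrArg (fun z : ℕ => (z:ℚ)) e5
    have e6 : (x+(k:ℚ))^(k-1) * (x+(k:ℚ))^i = (x+(k:ℚ))^(k+i-1) := by
      rw [← pow_add]; congr 1; omega
    have e7 : n - (k + i) = n - k - i := by omega
    rw [e1, e2, e3, hF]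
    simp only
    rw [e4, e7]
    push_cast
    calc (n.choose k : ℚ) * x * (x + k)^(k-1) *
          ((-1:ℚ)^((k+i)+k) * (x+y+n)^(n-k-i) * (x+k)^i * ((n-k).choose i : ℚ))
        = (-1:ℚ)^((k+i)+k) * ((n.choose k : ℚ) * ((n-k).choose i : ℚ)) * x *
            ((x+k)^(k-1) * (x+k)^i) * (x+y+n)^(n-k-i) := by ring
      _ = (-1:ℚ)^((k+i)+k) * ((n.choose (k+i) : ℚ) * ((k+i).choose k : ℚ)) * x *
            (x+k)^(k+i-1) * (x+y+n)^(n-k-i) := by rw [e5', e6]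
      _ = (-1:ℚ)^((k+i)+k) * (n.choose (k+i) : ℚ) * ((k+i).choose k : ℚ) * x *
            (x+k)^(k+i-1) * (x+y+n)^(n-k-i) := by ring
  have step3 : ∑ k ∈ Icc 1 n, ∑ m ∈ Icc k n, F k m = ∑ m ∈ Icc 1 n, ∑ k ∈ Icc 1 m, F k m := by
    refine Finset.sum_comm' fun k m => ?_
    simp only [Finset.mem_Icc]
    omega
  have step4 : ∀ m ∈ Icc 1 n, ∑ k ∈ Icc 1 m, F k m = - g m := by
    intro m hm
    rw [Finset.mem_Icc] at hm
    obtain ⟨hm1, hmn⟩ := hm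
    have hD := altD m hm1 x
    rw [sum_range_succ_eq_Icc (fun k => (-1:ℚ)^k * (m.choose k : ℚ) * (x + k)^(m-1)) m] at hD
    simp only [pow_zero, Nat.choose_zero_right, Nat.cast_one, Nat.cast_zero, add_zero,
      one_mul] at hD
    have hIcc : ∑ k ∈ Icc 1 m, (-1:ℚ)^k * (m.choose k : ℚ) * (x + k)^(m-1) = - x^(m-1) := by
      linarith
    have hxm : x * x^(m-1) = x^m := by
      rw [← pow_succ']; congr 1; omega
    calc ∑ k ∈ Icc 1 m, F k m
        = ((-1:ℚ)^m * (n.choose m : ℚ) * x * (x+y+n)^(n-m)) *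
            ∑ k ∈ Icc 1 m, (-1:ℚ)^k * (m.choose k : ℚ) * (x + k)^(m-1) := by
          rw [Finset.mul_sum]
          refine Finset.sum_congr rfl fun k _ => ?_
          rw [hF]
          simp only
          rw [pow_add]
          ring
      _ = ((-1:ℚ)^m * (n.choose m : ℚ) * x * (x+y+n)^(n-m)) * (- x^(m-1)) := by rw [hIcc]
      _ = - g m := by rw [hg]; simp only; rw [← hxm]; ring
  rw [step1, Finset.sum_congr rfl step2, step3, Finset.sum_congr rfl step4,
    sum_range_succ_eq_Icc g n]
  have : g 0 = (x+y+n)^n := by rw [hg]; simp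
  rw [← this]
  rw [Finset.sum_neg_distrib]
  ring

lemma abelC (n : ℕ) (hn : 1 ≤ n) (x y : ℚ) :
    y * (y + n)^(n-1) + x * (x + n)^(n-1)
      + ∑ k ∈ Icc 1 (n-1), (n.choose k : ℚ) * x * (x + k)^(k-1) * y * (y + ((n-k:ℕ):ℚ))^((n-k)-1)
      = (x + y) * (x + y + n)^(n-1) := by
  have split : ∀ k ∈ Icc 1 (n-1),
      (n.choose k : ℚ) * x * (x + k)^(k-1) * y * (y + ((n-k:ℕ):ℚ))^((n-k)-1)
        = (n.choose k : ℚ) * x * (x + k)^(k-1) * (y + ((n-k:ℕ):ℚ))^(n-k)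
          - (n:ℚ) * ((n-1).choose k : ℚ) * x * (x + k)^(k-1)
              * ((y+1) + (((n-1)-k:ℕ):ℚ))^((n-1)-k) := by
    intro k hk
    rw [Finset.mem_Icc] at hk
    obtain ⟨hk1, hkn⟩ := hk
    have h1 : (y + ((n-k:ℕ):ℚ))^(n-k) = (y + ((n-k:ℕ):ℚ)) * (y + ((n-k:ℕ):ℚ))^((n-k)-1) := by
      rw [← pow_succ']; congr 1; omega
    have h2 : ((y+1) + (((n-1)-k:ℕ):ℚ)) = (y + ((n-k:ℕ):ℚ)) := by
      have : ((n-1)-k : ℕ) = (n-k) - 1 := by omega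
      rw [this, Nat.cast_sub (by omega : 1 ≤ n - k)]
      push_cast
      ring
    have h3 : (n-1)-k = (n-k)-1 := by omega
    have h4 : ((n:ℚ)) * ((n-1).choose k : ℚ) = (n.choose k : ℚ) * (((n-k:ℕ)):ℚ) := by
      have hnat : n.choose k * (n - k) = n * ((n-1).choose k) := by
        have h5 := Nat.choose_succ_right_eq n k
        have h6 := Nat.add_one_mul_choose_eq (n-1) k
        have h7 : n - 1 + 1 = n := by omega
        rw [h7] at h6
        omega
      exact_mod_cast (congrArg (fun z : ℕ => (z:ℚ)) hnat).symm
    rw [h1, h2, h3, h4]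
    ring
  rw [Finset.sum_congr rfl split, Finset.sum_sub_distrib]
  -- first sum: relate to abelA n
  have hA := abelA n x y
  have hsum1 : ∑ k ∈ Icc 1 (n-1), (n.choose k : ℚ) * x * (x + k)^(k-1) * (y + ((n-k:ℕ):ℚ))^(n-k)
      = (x + y + n)^n - (y+n)^n - x * (x+n)^(n-1) := by
    have hins : Icc 1 n = insert n (Icc 1 (n-1)) := by
      ext a
      simp only [Finset.mem_Icc, Finset.mem_insert]
      omega
    rw [hins, Finset.sum_insert (by simp only [Finset.mem_Icc]; omega)] at hA
    have hlast : (n.choose n : ℚ) * x * (x + n)^(n-1) * (y + ((n-n:ℕ):ℚ))^(n-n) = x * (x+n)^(n-1) := by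
      simp
    rw [hlast] at hA
    linarith
  -- second sum: abelA (n-1) x (y+1)
  have hA2 := abelA (n-1) x (y+1)
  have hsum2 : ∑ k ∈ Icc 1 (n-1), (n:ℚ) * ((n-1).choose k : ℚ) * x * (x + k)^(k-1)
        * ((y+1) + (((n-1)-k:ℕ):ℚ))^((n-1)-k)
      = (n:ℚ) * ((x + y + n)^(n-1) - (y + n)^(n-1)) := by
    have hc1 : ((y+1) + ((n-1:ℕ):ℚ)) = y + n := by
      rw [Nat.cast_sub (by omega : 1 ≤ n)]; push_cast; ring
    have hc2 : (x + (y+1) + ((n-1:ℕ):ℚ)) = x + y + n := by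
      rw [Nat.cast_sub (by omega : 1 ≤ n)]; push_cast; ring
    rw [hc1, hc2] at hA2
    calc ∑ k ∈ Icc 1 (n-1), (n:ℚ) * ((n-1).choose k : ℚ) * x * (x + k)^(k-1)
          * ((y+1) + (((n-1)-k:ℕ):ℚ))^((n-1)-k)
        = (n:ℚ) * ∑ k ∈ Icc 1 (n-1), ((n-1).choose k : ℚ) * x * (x + k)^(k-1)
          * ((y+1) + (((n-1)-k:ℕ):ℚ))^((n-1)-k) := by
          rw [Finset.mul_sum]; refine Finset.sum_congr rfl fun k _ => by ring
      _ = (n:ℚ) * ((x + y + n)^(n-1) - (y + n)^(n-1)) := by rw [← hA2]; ring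
  rw [hsum1, hsum2]
  have hn1 : (y+(n:ℚ))^n = (y+n) * (y+n)^(n-1) := by rw [← pow_succ']; congr 1; omega
  have hn2 : (x+y+(n:ℚ))^n = (x+y+n) * (x+y+n)^(n-1) := by rw [← pow_succ']; congr 1; omega
  rw [hn1, hn2]
  ring
lemma sum_range_eq_Icc (f : ℕ → ℚ) (m : ℕ) (hm : 1 ≤ m) :
    ∑ k ∈ range m, f k = f 0 + ∑ k ∈ Icc 1 (m-1), f k := by
  obtain ⟨m', rfl⟩ : ∃ m', m = m'+1 := ⟨m-1, by omega⟩
  simpa using sum_range_succ_eq_Icc f m'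



lemma cayley_key (n : ℕ) (hn : 2 ≤ n) :
    ∑ i ∈ Icc 1 (n-1), (n.choose i : ℚ) * (i:ℚ)^(i-1) * ((n-i:ℕ):ℚ)^((n-i)-1)
      = 2 * ((n:ℚ)-1) * (n:ℚ)^(n-2) := by
  set G : ℚ → ℚ := fun t =>
    ∑ i ∈ Icc 1 (n-1), (n.choose i : ℚ) * (t+(i:ℚ))^(i-1) * (t+((n-i:ℕ):ℚ))^((n-i)-1) with hG
  set H : ℚ → ℚ := fun t =>
    2 * ∑ j ∈ Icc 1 (n-1), ((n-1).choose j : ℚ) * (n:ℚ)^((n-1)-j) * (2^j - 1) * t^(j-1) with hH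
  have hGH : ∀ t : ℚ, t ≠ 0 → G t = H t := by
    intro t ht
    have hC := abelC n (by omega) t t
    have hsq : ∑ k ∈ Icc 1 (n-1), (n.choose k : ℚ) * t * (t + k)^(k-1) * t * (t + ((n-k:ℕ):ℚ))^((n-k)-1)
        = t^2 * G t := by
      rw [hG]
      simp only
      rw [Finset.mul_sum]
      refine Finset.sum_congr rfl fun k _ => by ring
    rw [hsq] at hC
    -- binomial expansions
    have hb1 : (2*t + (n:ℚ))^(n-1)
        = ∑ j ∈ range n, (2:ℚ)^j * t^j * (n:ℚ)^((n-1)-j) * ((n-1).choose j : ℚ) := by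
      rw [add_pow]
      refine Finset.sum_congr (by congr 1; omega) fun j _ => ?_
      rw [mul_pow]
    have hb2 : (t + (n:ℚ))^(n-1)
        = ∑ j ∈ range n, t^j * (n:ℚ)^((n-1)-j) * ((n-1).choose j : ℚ) := by
      rw [add_pow]
      exact Finset.sum_congr (by congr 1; omega) fun j _ => rfl
    have hts : t^2 * G t = 2*t*(2*t+(n:ℚ))^(n-1) - 2*t*(t+(n:ℚ))^(n-1) := by
      rw [show t + t = 2*t from by ring] at hC
      linarith
    have hexp : 2*t*(2*t+(n:ℚ))^(n-1) - 2*t*(t+(n:ℚ))^(n-1) = t^2 * H t := by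
      rw [hb1, hb2, hH]
      simp only
      rw [Finset.mul_sum, Finset.mul_sum, Finset.mul_sum, ← Finset.sum_sub_distrib]
      have e1 : ∀ j ∈ range n,
          2*t*((2:ℚ)^j * t^j * (n:ℚ)^((n-1)-j) * ((n-1).choose j : ℚ))
            - 2*t*(t^j * (n:ℚ)^((n-1)-j) * ((n-1).choose j : ℚ))
          = 2 * (((n-1).choose j : ℚ) * (n:ℚ)^((n-1)-j) * ((2:ℚ)^j - 1)) * t^(j+1) := by
        intro j _
        rw [pow_succ]
        ring
      rw [Finset.sum_congr rfl e1]
      rw [sum_range_eq_Icc (fun j => 2 * (((n-1).choose j : ℚ) * (n:ℚ)^((n-1)-j) * ((2:ℚ)^j - 1)) * t^(j+1)) n (by omega)]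
      simp only [pow_zero, sub_self, mul_zero, zero_mul, mul_one, zero_add]
      rw [Finset.mul_sum]
      refine Finset.sum_congr rfl fun j hj => ?_
      rw [Finset.mem_Icc] at hj
      have : t^(j+1) = t^2 * t^(j-1) := by rw [← pow_add]; congr 1; omega
      rw [this]
      ring
    have : t^2 * G t = t^2 * H t := by rw [hts, hexp]
    exact mul_left_cancel₀ (pow_ne_zero 2 ht) this
  have hcontG : Continuous G := by rw [hG]; fun_prop
  have hcontH : Continuous H := by rw [hH]; fun_prop
  have hdense : Dense {t : ℚ | t ≠ 0} := dense_compl_singleton 0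
  have heq : G = H := hcontG.ext_on hdense hcontH (fun t ht => hGH t ht)
  have h0 : G 0 = H 0 := congrFun heq 0
  have hG0 : G 0 = ∑ i ∈ Icc 1 (n-1), (n.choose i : ℚ) * (i:ℚ)^(i-1) * ((n-i:ℕ):ℚ)^((n-i)-1) := by
    rw [hG]; simp
  have hH0 : H 0 = 2 * ((n:ℚ)-1) * (n:ℚ)^(n-2) := by
    rw [hH]
    simp only
    have hs : ∑ j ∈ Icc 1 (n-1), ((n-1).choose j : ℚ) * (n:ℚ)^((n-1)-j) * (2^j - 1) * (0:ℚ)^(j-1)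
        = ((n:ℚ)-1) * (n:ℚ)^(n-2) := by
      rw [Finset.sum_eq_single 1]
      · have : ((n-1).choose 1 : ℚ) = (n:ℚ) - 1 := by
          rw [Nat.choose_one_right]
          rw [Nat.cast_sub (by omega : 1 ≤ n)]
          simp
        rw [this]
        have h2 : (n-1)-1 = n-2 := by omega
        rw [h2]
        norm_num
      · intro j hj hj1
        rw [Finset.mem_Icc] at hj
        have : (0:ℚ)^(j-1) = 0 := by
          apply zero_pow
          omega
        rw [this, mul_zero]
      · intro h
        exfalso
        apply h
        rw [Finset.mem_Icc]
        omega
    rw [hs]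
    ring
  rw [← hG0, h0, hH0]

lemma pow_clean (m : ℕ) (hm : 1 ≤ m) : (m:ℚ) * (m:ℚ)^((m:ℤ)-2) = (m:ℚ)^((m-1 : ℕ)) := by
  have hm0 : (m:ℚ) ≠ 0 := Nat.cast_ne_zero.mpr (by omega)
  have he : ((m:ℤ)-2) = ((m-1:ℕ):ℤ) - 1 := by
    have : ((m-1:ℕ):ℤ) = (m:ℤ) - 1 := by
      push_cast [Nat.cast_sub hm]
      ring
    omega
  rw [he, zpow_sub₀ hm0, zpow_natCast, zpow_one]
  field_simp

theorem dziobek_cayley (T : ℕ → ℚ) (h1 : T 1 = 1)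
    (hrec : ∀ n : ℕ, 2 ≤ n →
      2 * ((n : ℚ) - 1) * T n =
        ∑ i ∈ Finset.Icc 1 (n - 1),
          (n.choose i : ℚ) * i * ((n - i : ℕ) : ℚ) * T i * T (n - i)) :
    ∀ n : ℕ, 1 ≤ n → T n = (n : ℚ) ^ ((n : ℤ) - 2) := by
  intro n
  induction n using Nat.strong_induction_on with
  | _ n IH =>
    intro hn1
    by_cases hone : n = 1
    · subst hone
      rw [h1]
      norm_num
    · have hn : 2 ≤ n := by omega
      have hr := hrec n hn
      have hterm : ∀ i ∈ Icc 1 (n-1),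
          (n.choose i : ℚ) * i * ((n-i:ℕ):ℚ) * T i * T (n-i)
            = (n.choose i : ℚ) * (i:ℚ)^(i-1) * ((n-i:ℕ):ℚ)^((n-i)-1) := by
        intro i hi
        rw [Finset.mem_Icc] at hi
        rw [IH i (by omega) (by omega), IH (n-i) (by omega) (by omega)]
        have e1 := pow_clean i (by omega)
        have e2 := pow_clean (n-i) (by omega)
        calc (n.choose i : ℚ) * i * ((n-i:ℕ):ℚ) * (i:ℚ)^((i:ℤ)-2) * ((n-i:ℕ):ℚ)^(((n-i:ℕ):ℤ)-2)
            = (n.choose i : ℚ) * ((i:ℚ) * (i:ℚ)^((i:ℤ)-2)) *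
                (((n-i:ℕ):ℚ) * ((n-i:ℕ):ℚ)^(((n-i:ℕ):ℤ)-2)) := by ring
          _ = (n.choose i : ℚ) * (i:ℚ)^(i-1) * ((n-i:ℕ):ℚ)^((n-i)-1) := by rw [e1, e2]
      rw [Finset.sum_congr rfl hterm, cayley_key n hn] at hr
      have hne : (2 * ((n:ℚ)-1)) ≠ 0 := by
        have : (2:ℚ) ≤ (n:ℚ) := by exact_mod_cast hn
        intro h
        nlinarith
      have hT : T n = (n:ℚ)^(n-2 : ℕ) := mul_left_cancel₀ hne hr
      rw [hT]
      rw [show ((n:ℤ)-2) = ((n-2:ℕ):ℤ) from by push_cast [Nat.cast_sub hn]; ring, zpow_natCast]
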